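/- If the information rates c_i may exceed the hints h_i, then any algorithm for RAO has competitive ratio Ω(√n). Concretely: for every ℓ ∈ ℕ with n = ℓ², there is an instance with T = n, t_i = n, h_i = n for all i, such that the optimal offline value is Θ(n^{2.5}) while every online algorithm (in the random order model) has expected value Θ(n²), hence at most Opt/√n (up to constants). -/

import Mathlib

/-- Reading one article online: given the algorithm `A` (which maps the history of
previously observed articles and the observations from the current article to the
decision whether to read one more time step), the history `hist`, the rate function
`c` of the current article and a fuel bound (remaining readable steps), return the
list of information values observed from this article. -/
def readSteps (A : List (List ℕ) → List ℕ → Bool) (hist : List (List ℕ)) (c : ℕ → ℕ) :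
    ℕ → List ℕ → List ℕ
  | 0, obs => obs
  | fuel + 1, obs =>
      if A hist obs then readSteps A hist c fuel (obs ++ [c (obs.length + 1)]) else obs

/-- Run the online algorithm `A` on a stream of articles (each given by its length and
its information-rate function), with the given remaining time budget; returns the total
information gained.  Decisions are online and discarding is irrevocable: every article
is processed once, in order. -/
def runAlg (A : List (List ℕ) → List ℕ → Bool) :
    List (List ℕ) → ℕ → List (ℕ × (ℕ → ℕ)) → ℕ
  | _, _, [] => 0
  | hist, budget, (len, c) :: rest =>
      let obs := readSteps A hist c (min len budget) []
      obs.sum + runAlg A (hist ++ [obs]) (budget - obs.length) rest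



lemma range'_map_snoc (c : ℕ → ℕ) (j : ℕ) :
    (List.range' 1 j).map c ++ [c (j + 1)] = (List.range' 1 (j+1)).map c := by
  rw [List.range'_concat]
  simp [Nat.add_comm]

lemma readSteps_shape (A : List (List ℕ) → List ℕ → Bool) (hist : List (List ℕ))
    (c : ℕ → ℕ) :
    ∀ (fuel j : ℕ), ∃ d, j ≤ d ∧ d ≤ j + fuel ∧
      readSteps A hist c fuel ((List.range' 1 j).map c) = (List.range' 1 d).map c := by
  intro fuel
  induction fuel with
  | zero => exact fun j => ⟨j, le_rfl, by omega, rfl⟩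
  | succ fuel ih =>
    intro j
    by_cases h : A hist ((List.range' 1 j).map c)
    · obtain ⟨d, h1, h2, h3⟩ := ih (j+1)
      refine ⟨d, by omega, by omega, ?_⟩
      rw [readSteps, if_pos h]
      have hlen : ((List.range' 1 j).map c).length = j := by simp
      rw [hlen, range'_map_snoc, h3]
    · exact ⟨j, le_rfl, by omega, by rw [readSteps, if_neg h]⟩

lemma readSteps_sync (A : List (List ℕ) → List ℕ → Bool) (hist : List (List ℕ))
    {ℓ : ℕ} {c₁ c₂ : ℕ → ℕ} (hc : ∀ i, i < ℓ → c₁ i = c₂ i) :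
    ∀ (fuel j : ℕ), j < ℓ →
      (∃ d, j ≤ d ∧ d < ℓ ∧
        readSteps A hist c₁ fuel ((List.range' 1 j).map c₁) = (List.range' 1 d).map c₁ ∧
        readSteps A hist c₂ fuel ((List.range' 1 j).map c₂) = (List.range' 1 d).map c₂) ∨
      (ℓ ≤ (readSteps A hist c₁ fuel ((List.range' 1 j).map c₁)).length ∧
       ℓ ≤ (readSteps A hist c₂ fuel ((List.range' 1 j).map c₂)).length) := by
  have hobs : ∀ j, j < ℓ → (List.range' 1 j).map c₁ = (List.range' 1 j).map c₂ := by
    intro j hj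
    apply List.map_congr_left
    intro i hi
    rw [List.mem_range'_1] at hi
    exact hc i (by omega)
  intro fuel
  induction fuel with
  | zero => exact fun j hj => Or.inl ⟨j, le_rfl, hj, rfl, rfl⟩
  | succ fuel ih =>
    intro j hj
    by_cases h : A hist ((List.range' 1 j).map c₁)
    · have h2 : A hist ((List.range' 1 j).map c₂) = true := by rw [← hobs j hj]; exact h
      have hlen1 : ((List.range' 1 j).map c₁).length = j := by simp
      have hlen2 : ((List.range' 1 j).map c₂).length = j := by simp
      have e1 : readSteps A hist c₁ (fuel+1) ((List.range' 1 j).map c₁)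
          = readSteps A hist c₁ fuel ((List.range' 1 (j+1)).map c₁) := by
        rw [readSteps, if_pos h, hlen1, range'_map_snoc]
      have e2 : readSteps A hist c₂ (fuel+1) ((List.range' 1 j).map c₂)
          = readSteps A hist c₂ fuel ((List.range' 1 (j+1)).map c₂) := by
        rw [readSteps, if_pos h2, hlen2, range'_map_snoc]
      rw [e1, e2]
      rcases Nat.lt_or_ge (j+1) ℓ with hjl | hjl
      · rcases ih (j+1) hjl with ⟨d, hd1, hd2, hr⟩ | hr
        · exact Or.inl ⟨d, by omega, hd2, hr⟩
        · exact Or.inr hr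
      · right
        obtain ⟨d1, hd1, _, hr1⟩ := readSteps_shape A hist c₁ fuel (j+1)
        obtain ⟨d2, hd2, _, hr2⟩ := readSteps_shape A hist c₂ fuel (j+1)
        rw [hr1, hr2]
        constructor <;> simp <;> omega
    · have h2 : A hist ((List.range' 1 j).map c₂) = false := by
        rw [← hobs j hj]; exact Bool.eq_false_iff.mpr h
      left
      exact ⟨j, le_rfl, hj, by rw [readSteps, if_neg h], by rw [readSteps, h2]; simp⟩

lemma spike_sum (p v : ℕ) (hp : 1 ≤ p) (hv : 1 ≤ v) :
    ∀ d, ((List.range' 1 d).map (fun j => if j = p then v else 1)).sum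
      = d + (if p ≤ d then v - 1 else 0) := by
  intro d
  induction d with
  | zero =>
    have h0 : ¬ p ≤ 0 := by omega
    simp [h0]
  | succ d ih =>
    rw [← range'_map_snoc]
    rw [List.sum_append, ih]
    simp only [List.sum_cons, List.sum_nil]
    by_cases h : d + 1 = p
    · subst h
      simp
      omega
    · rw [if_neg h]
      by_cases h2 : p ≤ d
      · rw [if_pos h2, if_pos (by omega)]; omega
      · rw [if_neg h2, if_neg (by omega)]; omega

def consT : List Bool ↪ List Bool := ⟨List.cons true, fun _ _ h => by simpa using h⟩
def consF : List Bool ↪ List Bool := ⟨List.cons false, fun _ _ h => by simpa using h⟩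

def TL : ℕ → ℕ → Finset (List Bool)
  | 0, 0 => {[]}
  | a+1, 0 => (TL a 0).map consT
  | 0, b+1 => (TL 0 b).map consF
  | a+1, b+1 => (TL a (b+1)).map consT ∪ (TL (a+1) b).map consF

lemma TL_disj (a b : ℕ) : Disjoint ((TL a (b+1)).map consT) ((TL (a+1) b).map consF) := by
  rw [Finset.disjoint_left]
  rintro t ht ht'
  simp only [Finset.mem_map, consT, consF, Function.Embedding.coeFn_mk] at ht ht'
  obtain ⟨u, _, hu⟩ := ht
  obtain ⟨v, _, hv⟩ := ht'
  rw [← hu] at hv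
  exact absurd (List.cons.inj hv).1 (by decide)

lemma card_TL : ∀ a b, (TL a b).card = (a+b).choose a
  | 0, 0 => by simp [TL]
  | a+1, 0 => by
    rw [TL, Finset.card_map, card_TL a 0]
    simp
  | 0, b+1 => by
    rw [TL, Finset.card_map, card_TL 0 b]
    simp
  | a+1, b+1 => by
    rw [TL, Finset.card_union_of_disjoint (TL_disj a b), Finset.card_map, Finset.card_map,
      card_TL a (b+1), card_TL (a+1) b]
    have : a + 1 + (b + 1) = (a + (b+1)) + 1 := by omega
    rw [this, Nat.choose_succ_succ]
    congr 1
    congr 1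
    omega

lemma mem_TL : ∀ (t : List Bool) (a b : ℕ), t.length = a + b → t.count true = a → t ∈ TL a b := by
  intro t
  induction t with
  | nil =>
    intro a b h1 h2
    simp at h1 h2
    have ha : a = 0 := by omega
    have hb : b = 0 := by omega
    subst ha; subst hb
    simp [TL]
  | cons x t ih =>
    intro a b h1 h2
    have hct : t.count true ≤ t.length := List.count_le_length
    cases x with
    | true =>
      have h2' : t.count true + 1 = a := by simpa using h2
      obtain ⟨a', rfl⟩ : ∃ a', a = a' + 1 := ⟨t.count true, by omega⟩
      cases b with
      | zero =>
        rw [TL]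
        simp only [Finset.mem_map, consT, Function.Embedding.coeFn_mk]
        exact ⟨t, ih a' 0 (by simp at h1; omega) (by omega), rfl⟩
      | succ b =>
        rw [TL]
        apply Finset.mem_union_left
        simp only [Finset.mem_map, consT, Function.Embedding.coeFn_mk]
        exact ⟨t, ih a' (b+1) (by simp at h1; omega) (by omega), rfl⟩
    | false =>
      have h2' : t.count true = a := by simpa using h2
      have hb : b ≠ 0 := by
        intro hb; subst hb; simp at h1; omega
      obtain ⟨b', rfl⟩ : ∃ b', b = b' + 1 := ⟨b - 1, by omega⟩
      cases a with
      | zero =>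
        rw [TL]
        simp only [Finset.mem_map, consF, Function.Embedding.coeFn_mk]
        exact ⟨t, ih 0 b' (by simp at h1; omega) h2', rfl⟩
      | succ a =>
        rw [TL]
        apply Finset.mem_union_right
        simp only [Finset.mem_map, consF, Function.Embedding.coeFn_mk]
        exact ⟨t, ih (a+1) b' (by simp at h1; omega) h2', rfl⟩


def cAf (ℓ : ℕ) : ℕ → ℕ := fun j => if j = ℓ then ℓ^4 else 1
def cBf (ℓ n : ℕ) : ℕ → ℕ := fun j => if j = n then ℓ^4 else 1


lemma arith_main (K L3 C1 C2 D1 D2 β d1 d2 ℓ n : ℕ)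
    (hE : D1 + D2 = C1) (hK : K = L3 * ℓ) (hK1 : 1 ≤ K) (hℓ1 : 1 ≤ ℓ) (hℓn : ℓ < n)
    (hd1 : d1 ≤ β) (hd2 : d2 ≤ β) (hβ : β ≤ n)
    (hscen : (d1 = d2 ∧ d1 < ℓ) ∨ (ℓ ≤ d1 ∧ ℓ ≤ d2)) :
    C1 * (d1 + (if ℓ ≤ d1 then K - 1 else 0))
      + (C1 * ((β - d1) + K * (if β - d1 = n then 1 else 0)) + L3 * (β - d1) * D1)
      + (C2 * (d2 + (if n ≤ d2 then K - 1 else 0))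
      + (C2 * ((β - d2) + K * (if β - d2 = n then 1 else 0)) + L3 * (β - d2) * D2))
      ≤ (C1 + C2) * (β + K * (if β = n then 1 else 0)) + L3 * β * C1 := by
  obtain ⟨g1, hg1⟩ : ∃ g1, β = d1 + g1 := ⟨β - d1, by omega⟩
  obtain ⟨g2, hg2⟩ : ∃ g2, β = d2 + g2 := ⟨β - d2, by omega⟩
  have hbg1 : β - d1 = g1 := by omega
  have hbg2 : β - d2 = g2 := by omega
  rw [hbg1, hbg2]
  rcases hscen with ⟨hdd, hdℓ⟩ | ⟨hp1, hp2⟩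
  · -- no probe: d1 = d2 < ℓ
    subst hdd
    rw [if_neg (show ¬ ℓ ≤ d1 by omega), if_neg (show ¬ n ≤ d1 by omega)]
    have hg12 : g1 = g2 := by omega
    subst hg12
    have hI : (if g1 = n then (1:ℕ) else 0) ≤ (if β = n then 1 else 0) := by
      split_ifs with h1 h2
      · omega
      · omega
      · omega
      · omega
    have e1 : L3 * g1 * D1 + L3 * g1 * D2 = L3 * g1 * C1 := by rw [← hE]; ring
    have e2 : L3 * g1 * C1 ≤ L3 * β * C1 :=
      Nat.mul_le_mul_right _ (Nat.mul_le_mul_left _ (by omega))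
    have e3 : C1 * (K * (if g1 = n then (1:ℕ) else 0)) ≤ C1 * (K * (if β = n then 1 else 0)) :=
      Nat.mul_le_mul_left _ (Nat.mul_le_mul_left _ hI)
    have e4 : C2 * (K * (if g1 = n then (1:ℕ) else 0)) ≤ C2 * (K * (if β = n then 1 else 0)) :=
      Nat.mul_le_mul_left _ (Nat.mul_le_mul_left _ hI)
    nlinarith [e1, e2, e3, e4]
  · -- probe: ℓ ≤ d1, ℓ ≤ d2
    obtain ⟨h, hh⟩ : ∃ h, β = ℓ + h := ⟨β - ℓ, by omega⟩
    have hgh1 : g1 ≤ h := by omega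
    have hgh2 : g2 ≤ h := by omega
    rw [if_pos hp1, if_neg (show ¬ g1 = n by omega), if_neg (show ¬ g2 = n by omega)]
    have eD : L3 * g1 * D1 + L3 * g2 * D2 ≤ L3 * h * C1 := by
      calc L3 * g1 * D1 + L3 * g2 * D2 ≤ L3 * h * D1 + L3 * h * D2 := by
            exact Nat.add_le_add (Nat.mul_le_mul_right _ (Nat.mul_le_mul_left _ hgh1))
              (Nat.mul_le_mul_right _ (Nat.mul_le_mul_left _ hgh2))
        _ = L3 * h * C1 := by rw [← hE]; ring
    obtain ⟨K', hK'⟩ : ∃ K', K = K' + 1 := ⟨K - 1, by omega⟩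
    rw [show K - 1 = K' by omega]
    have e1 : C1 * d1 + C1 * g1 = C1 * β := by rw [hg1]; ring
    have e2 : C2 * d2 + C2 * g2 = C2 * β := by rw [hg2]; ring
    have e5 : L3 * h * C1 ≤ L3 * β * C1 :=
      Nat.mul_le_mul_right _ (Nat.mul_le_mul_left _ (by omega))
    have e6 : C1 * K' ≤ C1 * K := Nat.mul_le_mul_left _ (by omega)
    have e7 : C2 * K' ≤ C2 * K := Nat.mul_le_mul_left _ (by omega)
    have eβ : L3 * β * C1 = K * C1 + L3 * h * C1 := by rw [hh, hK]; ring
    by_cases hnd : n ≤ d2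
    · have hβn : β = n := by omega
      rw [if_pos hnd, if_pos hβn]
      linarith [e1, e2, eD, e5, e6, e7]
    · rw [if_neg hnd]
      have e8 : (0:ℕ) ≤ (C1 + C2) * (K * (if β = n then 1 else 0)) := Nat.zero_le _
      linarith [e1, e2, eD, e6, eβ, e8]

lemma main_bound (A : List (List ℕ) → List ℕ → Bool) (ℓ n : ℕ) (hℓ : 2 ≤ ℓ) (hn : n = ℓ^2) :
    ∀ m a b, a + b = m → ∀ (hist : List (List ℕ)) (β : ℕ), β ≤ n →
    ∑ t ∈ TL a b, runAlg A hist β (t.map fun x => (n, if x then cAf ℓ else cBf ℓ n))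
      ≤ m.choose a * (β + ℓ^4 * (if β = n then 1 else 0))
        + ℓ^3 * β * (if a = 0 then 0 else (m-1).choose (a-1)) := by
  intro m
  induction m with
  | zero =>
    intro a b hab hist β hβ
    have ha : a = 0 := by omega
    have hb : b = 0 := by omega
    subst ha; subst hb
    simp [TL, runAlg]
  | succ m ih =>
    intro a b hab hist β hβ
    have hℓn : ℓ < n := by nlinarith
    have hℓ4 : 1 ≤ ℓ^4 := Nat.one_le_pow _ _ (by omega)
    -- synchronization of the two article types on the first article
    have hc : ∀ i, i < ℓ → cAf ℓ i = cBf ℓ n i := by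
      intro i hi
      simp only [cAf, cBf]
      rw [if_neg (by omega), if_neg (by omega)]
    have hsync := readSteps_sync A hist hc (min n β) 0 (by omega)
    have hsh1 := readSteps_shape A hist (cAf ℓ) (min n β) 0
    have hsh2 := readSteps_shape A hist (cBf ℓ n) (min n β) 0
    simp only [List.range'_zero, List.map_nil, Nat.zero_add, Nat.zero_le, true_and] at hsync hsh1 hsh2
    obtain ⟨e1, he1f, he1⟩ := hsh1
    obtain ⟨e2, he2f, he2⟩ := hsh2
    obtain ⟨d1, d2, hobs1, hobs2, hd1f, hd2f, hscen⟩ :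
        ∃ d1 d2, readSteps A hist (cAf ℓ) (min n β) [] = (List.range' 1 d1).map (cAf ℓ) ∧
          readSteps A hist (cBf ℓ n) (min n β) [] = (List.range' 1 d2).map (cBf ℓ n) ∧
          d1 ≤ min n β ∧ d2 ≤ min n β ∧
          ((d1 = d2 ∧ d1 < ℓ) ∨ (ℓ ≤ d1 ∧ ℓ ≤ d2)) := by
      rcases hsync with ⟨d, hdℓ, h1, h2⟩ | ⟨hL1, hL2⟩
      · have hde1 : e1 = d := by
          have := he1.symm.trans h1
          have := congrArg List.length this
          simpa using this
        have hde2 : e2 = d := by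
          have := he2.symm.trans h2
          have := congrArg List.length this
          simpa using this
        exact ⟨d, d, h1, h2, by omega, by omega, Or.inl ⟨rfl, hdℓ⟩⟩
      · refine ⟨e1, e2, he1, he2, he1f, he2f, Or.inr ⟨?_, ?_⟩⟩
        · rw [he1] at hL1; simpa using hL1
        · rw [he2] at hL2; simpa using hL2
    have hd1β : d1 ≤ β := le_trans hd1f (min_le_right n β)
    have hd2β : d2 ≤ β := le_trans hd2f (min_le_right n β)
    have hlen1 : (readSteps A hist (cAf ℓ) (min n β) []).length = d1 := by rw [hobs1]; simp
    have hlen2 : (readSteps A hist (cBf ℓ n) (min n β) []).length = d2 := by rw [hobs2]; simp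
    have hsum1 : (readSteps A hist (cAf ℓ) (min n β) []).sum
        = d1 + (if ℓ ≤ d1 then ℓ^4 - 1 else 0) := by
      rw [hobs1]; exact spike_sum ℓ (ℓ^4) (by omega) hℓ4 d1
    have hsum2 : (readSteps A hist (cBf ℓ n) (min n β) []).sum
        = d2 + (if n ≤ d2 then ℓ^4 - 1 else 0) := by
      rw [hobs2]; exact spike_sum n (ℓ^4) (by omega) hℓ4 d2
    -- branch bound
    have branch : ∀ a' b', a' + b' = m → ∀ (c : ℕ → ℕ) (d : ℕ),
        (readSteps A hist c (min n β) []).length = d → d ≤ β →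
        ∑ t ∈ TL a' b', runAlg A hist β ((n, c) :: t.map fun x => (n, if x then cAf ℓ else cBf ℓ n))
          ≤ m.choose a' * (readSteps A hist c (min n β) []).sum
            + (m.choose a' * ((β - d) + ℓ^4 * (if β - d = n then 1 else 0))
               + ℓ^3 * (β - d) * (if a' = 0 then 0 else (m-1).choose (a'-1))) := by
      intro a' b' hab' c d hlen hdβ
      have hrw : ∀ L, runAlg A hist β ((n, c) :: L) =
          (readSteps A hist c (min n β) []).sum +
            runAlg A (hist ++ [readSteps A hist c (min n β) []]) (β - d) L := by
        intro L
        rw [← hlen]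
        rfl
      calc ∑ t ∈ TL a' b', runAlg A hist β ((n, c) :: t.map fun x => (n, if x then cAf ℓ else cBf ℓ n))
          = ∑ t ∈ TL a' b', ((readSteps A hist c (min n β) []).sum +
              runAlg A (hist ++ [readSteps A hist c (min n β) []]) (β - d)
                (t.map fun x => (n, if x then cAf ℓ else cBf ℓ n))) := by
            exact Finset.sum_congr rfl fun t _ => hrw _
        _ = m.choose a' * (readSteps A hist c (min n β) []).sum +
            ∑ t ∈ TL a' b', runAlg A (hist ++ [readSteps A hist c (min n β) []]) (β - d)
                (t.map fun x => (n, if x then cAf ℓ else cBf ℓ n)) := by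
            rw [Finset.sum_add_distrib, Finset.sum_const, card_TL, hab', smul_eq_mul]
        _ ≤ _ := by
            exact Nat.add_le_add_left (ih a' b' hab' _ (β - d) (by omega)) _
    have hK : (ℓ:ℕ)^4 = ℓ^3 * ℓ := by ring
    have hfT : ∀ t : List Bool, (true :: t).map (fun x => (n, if x then cAf ℓ else cBf ℓ n))
        = (n, cAf ℓ) :: t.map (fun x => (n, if x then cAf ℓ else cBf ℓ n)) := fun t => rfl
    have hfF : ∀ t : List Bool, (false :: t).map (fun x => (n, if x then cAf ℓ else cBf ℓ n))
        = (n, cBf ℓ n) :: t.map (fun x => (n, if x then cAf ℓ else cBf ℓ n)) := fun t => rfl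
    rcases a with _ | a
    · rcases b with _ | b
      · omega
      · -- a = 0, b = b+1
        rw [TL, Finset.sum_map]
        simp only [consF, Function.Embedding.coeFn_mk, hfF]
        have hb2 := branch 0 b (by omega) (cBf ℓ n) d2 hlen2 hd2β
        refine le_trans hb2 ?_
        rw [hsum2]
        have har := arith_main (ℓ^4) (ℓ^3) 0 (m.choose 0) 0 0 β d1 d2 ℓ n
          (by omega) hK hℓ4 (by omega) hℓn hd1β hd2β hβ hscen
        simp only [Nat.choose_zero_right] at har ⊢
        simp only [if_pos rfl, if_true, ite_true, mul_zero, zero_mul, zero_add, add_zero] at har ⊢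
        linarith [har]
    · rcases b with _ | b
      · -- a = a+1, b = 0
        have hma : m = a := by omega
        rw [TL, Finset.sum_map]
        simp only [consT, Function.Embedding.coeFn_mk, hfT]
        have hb1 := branch a 0 (by omega) (cAf ℓ) d1 hlen1 hd1β
        refine le_trans hb1 ?_
        rw [hsum1]
        set D1 : ℕ := if a = 0 then 0 else (m-1).choose (a-1) with hD1
        have hD1C : D1 ≤ m.choose a := by
          rcases Nat.eq_zero_or_pos a with ha0 | hapos
          · subst ha0; simp [hD1]
          · obtain ⟨a', rfl⟩ : ∃ a', a = a' + 1 := ⟨a - 1, by omega⟩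
            obtain ⟨m', rfl⟩ : ∃ m', m = m' + 1 := ⟨m - 1, by omega⟩
            rw [hD1, if_neg (by omega)]
            simp only [Nat.add_sub_cancel]
            rw [Nat.choose_succ_succ]
            omega
        have hE : D1 + (m.choose a - D1) = m.choose a := by omega
        have har := arith_main (ℓ^4) (ℓ^3) (m.choose a) 0 D1 (m.choose a - D1) β d1 d2 ℓ n
          hE hK hℓ4 (by omega) hℓn hd1β hd2β hβ hscen
        have hcs : (m+1).choose (a+1) = m.choose a := by
          subst hma; rw [Nat.choose_self, Nat.choose_self]
        rw [hcs]
        simp only [Nat.add_eq, if_neg (Nat.succ_ne_zero a), Nat.add_sub_cancel] at har ⊢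
        simp only [mul_zero, zero_mul, zero_add, add_zero] at har ⊢
        linarith [har, Nat.zero_le (ℓ^3 * (β - d2) * (m.choose a - D1))]
      · -- a = a+1, b = b+1
        rw [TL, Finset.sum_union (TL_disj a b), Finset.sum_map, Finset.sum_map]
        simp only [consT, consF, Function.Embedding.coeFn_mk, hfT, hfF]
        have hb1 := branch a (b+1) (by omega) (cAf ℓ) d1 hlen1 hd1β
        have hb2 := branch (a+1) b (by omega) (cBf ℓ n) d2 hlen2 hd2β
        refine le_trans (Nat.add_le_add hb1 hb2) ?_
        rw [hsum1, hsum2]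
        set D1 : ℕ := if a = 0 then 0 else (m-1).choose (a-1) with hD1
        have hE : D1 + (m-1).choose a = m.choose a := by
          rcases Nat.eq_zero_or_pos a with ha0 | hapos
          · subst ha0; simp [hD1]
          · obtain ⟨a', rfl⟩ : ∃ a', a = a' + 1 := ⟨a - 1, by omega⟩
            obtain ⟨m', rfl⟩ : ∃ m', m = m' + 1 := ⟨m - 1, by omega⟩
            rw [hD1, if_neg (by omega)]
            simp only [Nat.add_sub_cancel]
            rw [Nat.choose_succ_succ]
        have har := arith_main (ℓ^4) (ℓ^3) (m.choose a) (m.choose (a+1)) D1 ((m-1).choose a)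
          β d1 d2 ℓ n hE hK hℓ4 (by omega) hℓn hd1β hd2β hβ hscen
        have hcs : (m+1).choose (a+1) = m.choose a + m.choose (a+1) := Nat.choose_succ_succ _ _
        rw [hcs]
        simp only [if_neg (Nat.succ_ne_zero a), Nat.add_sub_cancel] at har ⊢
        linarith [har]

def typeListFn (n ℓ : ℕ) (π : Equiv.Perm (Fin n)) : List Bool :=
  List.ofFn fun k => decide ((π k : ℕ) < ℓ)

lemma count_true_list (l : List Bool) :
    l.count true = (l.map fun b => if b = true then 1 else 0).sum := by
  induction l with
  | nil => simp
  | cons x l ih =>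
    cases x <;> simp [List.count_cons, ih] <;> omega

lemma card_filter_lt (n ℓ : ℕ) (h : ℓ ≤ n) :
    (Finset.univ.filter fun i : Fin n => (i:ℕ) < ℓ).card = ℓ := by
  apply Finset.card_eq_of_bijective (fun i hi => (⟨i, lt_of_lt_of_le hi h⟩ : Fin n))
  · intro a ha
    simp only [Finset.mem_filter, Finset.mem_univ, true_and] at ha
    exact ⟨a, ha, by simp⟩
  · intro i hi
    simp [hi]
  · intro i j hi hj hij
    simpa using congrArg Fin.val hij

lemma sum_ite_lt (n ℓ v : ℕ) (h : ℓ ≤ n) :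
    (∑ i : Fin n, if (i:ℕ) < ℓ then v else 0) = ℓ * v := by
  rw [Finset.sum_ite, Finset.sum_const, Finset.sum_const_zero, add_zero, smul_eq_mul,
    card_filter_lt n ℓ h]

lemma count_typeListFn (n ℓ : ℕ) (h : ℓ ≤ n) (π : Equiv.Perm (Fin n)) :
    (typeListFn n ℓ π).count true = ℓ := by
  rw [count_true_list, typeListFn, List.map_ofFn, List.sum_ofFn]
  have : ∀ k : Fin n, ((fun b => if b = true then 1 else 0) ∘ fun k => decide ((π k : ℕ) < ℓ)) k
      = (fun i : Fin n => if (i:ℕ) < ℓ then 1 else 0) (π k) := by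
    intro k; simp
  rw [Finset.sum_congr rfl fun k _ => this k]
  rw [Equiv.sum_comp π (fun i : Fin n => if (i:ℕ) < ℓ then 1 else 0)]
  rw [sum_ite_lt n ℓ 1 h, mul_one]

lemma card_subtype_lt (n ℓ : ℕ) (h : ℓ ≤ n) (π₀ : Equiv.Perm (Fin n)) :
    Fintype.card {k : Fin n // (π₀ k : ℕ) < ℓ} = ℓ := by
  have e : {k : Fin n // (π₀ k : ℕ) < ℓ} ≃ {i : Fin n // (i : ℕ) < ℓ} :=
    Equiv.subtypeEquiv π₀ (fun k => Iff.rfl)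
  rw [Fintype.card_congr e, Fintype.card_subtype]
  exact card_filter_lt n ℓ h


def emb1 {n ℓ : ℕ} (π₀ π : Equiv.Perm (Fin n))
    (hπ : ∀ k : Fin n, ((π k : ℕ) < ℓ ↔ (π₀ k : ℕ) < ℓ)) :
    {k : Fin n // (π₀ k : ℕ) < ℓ} ↪ Fin ℓ :=
  ⟨fun k => ⟨π k.1, (hπ k.1).mpr k.2⟩, by
    intro a b hab
    have hv : (π a.1 : ℕ) = (π b.1 : ℕ) := by simpa [Fin.ext_iff] using hab
    exact Subtype.ext (π.injective (Fin.ext hv))⟩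

def emb2 {n ℓ : ℕ} (π₀ π : Equiv.Perm (Fin n))
    (hπ : ∀ k : Fin n, ((π k : ℕ) < ℓ ↔ (π₀ k : ℕ) < ℓ)) :
    {k : Fin n // ¬ (π₀ k : ℕ) < ℓ} ↪ Fin (n - ℓ) :=
  ⟨fun k => ⟨(π k.1 : ℕ) - ℓ, by
      have h1 : ¬ (π k.1 : ℕ) < ℓ := fun hc => k.2 ((hπ k.1).mp hc)
      have h2 : (π k.1 : ℕ) < n := (π k.1).isLt
      omega⟩, by
    intro a b hab
    have h1 : ¬ (π a.1 : ℕ) < ℓ := fun hc => a.2 ((hπ a.1).mp hc)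
    have h1b : ¬ (π b.1 : ℕ) < ℓ := fun hc => b.2 ((hπ b.1).mp hc)
    have h2a : (π a.1 : ℕ) < n := (π a.1).isLt
    have hv : (π a.1 : ℕ) - ℓ = (π b.1 : ℕ) - ℓ := by simpa [Fin.ext_iff] using hab
    have hv' : (π a.1 : ℕ) = (π b.1 : ℕ) := by omega
    exact Subtype.ext (π.injective (Fin.ext hv'))⟩

lemma fiber_card_le (n ℓ : ℕ) (h : ℓ ≤ n) (t : List Bool) :
    (Finset.univ.filter fun π : Equiv.Perm (Fin n) => typeListFn n ℓ π = t).card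
      ≤ ℓ.factorial * (n - ℓ).factorial := by
  rcases Finset.eq_empty_or_nonempty
      (Finset.univ.filter fun π : Equiv.Perm (Fin n) => typeListFn n ℓ π = t) with he | ⟨π₀, hπ₀⟩
  · rw [he]; simp
  · simp only [Finset.mem_filter, Finset.mem_univ, true_and] at hπ₀
    -- fiber condition as pointwise iff
    have hiff : ∀ π : Equiv.Perm (Fin n), typeListFn n ℓ π = t →
        ∀ k, ((π k : ℕ) < ℓ ↔ (π₀ k : ℕ) < ℓ) := by
      intro π hπ k
      have : typeListFn n ℓ π = typeListFn n ℓ π₀ := hπ.trans hπ₀.symm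
      rw [typeListFn, typeListFn, List.ofFn_inj] at this
      have := congrFun this k
      simpa using this
    classical
    set tgt := (Finset.univ : Finset (({k : Fin n // (π₀ k : ℕ) < ℓ} ↪ Fin ℓ) ×
      ({k : Fin n // ¬ (π₀ k : ℕ) < ℓ} ↪ Fin (n - ℓ))))
    have hcard : tgt.card = ℓ.factorial * (n - ℓ).factorial := by
      rw [Finset.card_univ, Fintype.card_prod, Fintype.card_embedding_eq,
        Fintype.card_embedding_eq, Fintype.card_fin, Fintype.card_fin,
        card_subtype_lt n ℓ h π₀, Fintype.card_subtype_compl, Fintype.card_fin,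
        card_subtype_lt n ℓ h π₀, Nat.descFactorial_self, Nat.descFactorial_self]
    rw [← hcard]
    refine Finset.card_le_card_of_injOn
      (fun π => if hπ : ∀ k : Fin n, ((π k : ℕ) < ℓ ↔ (π₀ k : ℕ) < ℓ)
        then (emb1 π₀ π hπ, emb2 π₀ π hπ)
        else (emb1 π₀ π₀ (fun _ => Iff.rfl), emb2 π₀ π₀ (fun _ => Iff.rfl)))
      (fun π _ => Finset.mem_univ _) ?_
    intro π hπm π' hπ'm heq
    simp only [Finset.coe_filter, Set.mem_setOf_eq, Finset.mem_univ, true_and] at hπm hπ'm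
    have hc : ∀ k : Fin n, ((π k : ℕ) < ℓ ↔ (π₀ k : ℕ) < ℓ) := hiff π hπm
    have hc' : ∀ k : Fin n, ((π' k : ℕ) < ℓ ↔ (π₀ k : ℕ) < ℓ) := hiff π' hπ'm
    dsimp only at heq
    rw [dif_pos hc, dif_pos hc'] at heq
    have h1 : emb1 π₀ π hc = emb1 π₀ π' hc' := congrArg Prod.fst heq
    have h2 : emb2 π₀ π hc = emb2 π₀ π' hc' := congrArg Prod.snd heq
    apply Equiv.ext
    intro k
    by_cases hk : (π₀ k : ℕ) < ℓ
    · have hfk := DFunLike.congr_fun h1 ⟨k, hk⟩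
      have hv : (π k : ℕ) = (π' k : ℕ) := by
        have := congrArg Fin.val hfk; exact this
      exact Fin.ext hv
    · have hfk := DFunLike.congr_fun h2 ⟨k, hk⟩
      have hv : (π k : ℕ) - ℓ = (π' k : ℕ) - ℓ := by
        exact Fin.ext_iff.mp hfk
      have hg1 : ¬ (π k : ℕ) < ℓ := fun hcon => hk ((hc k).mp hcon)
      have hg2 : ¬ (π' k : ℕ) < ℓ := fun hcon => hk ((hc' k).mp hcon)
      exact Fin.ext (by omega)


/-- If information rates may exceed the hints, online reading is
`Ω(√n)`-competitive: for `n = ℓ²`, `T = n`, all lengths and hints equal to `n`, with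
`√n` articles of type A (rate `n² = ℓ⁴` at step `ℓ`, else `1`) and the rest of type B
(rate `ℓ⁴` at step `n`, else `1`), the offline optimum is at least `ℓ⁵ = n^{2.5}`,
while every (deterministic) online algorithm has expected value `O(n²) = O(ℓ⁴)` over
the uniformly random arrival order; hence at most `Opt/√n` up to constants. -/
theorem rates_exceeding_hints_lower_bound (ℓ : ℕ) (hℓ : 2 ≤ ℓ) :
    ∀ n, n = ℓ ^ 2 →
    ∀ art : Fin n → ℕ → ℕ,
      (art = fun i : Fin n => if (i : ℕ) < ℓ then (fun j => if j = ℓ then ℓ ^ 4 else 1)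
                      else (fun j => if j = n then ℓ ^ 4 else 1)) →
      -- the offline optimum is Θ(n^{2.5}): some feasible offline solution gains ≥ ℓ⁵
      ((∃ τ : Fin n → ℕ, (∀ i, τ i ≤ n) ∧ (∑ i, τ i ≤ n) ∧
          ℓ ^ 5 ≤ ∑ i, ∑ j ∈ Finset.Icc 1 (τ i), art i j) ∧
      -- while every online algorithm gains only Θ(n²) in expectation
      (∀ A : List (List ℕ) → List ℕ → Bool,
          ∑ π : Equiv.Perm (Fin n),
              runAlg A [] n (List.ofFn fun k => (n, art (π k)))
            ≤ 4 * ℓ ^ 4 * Nat.factorial n)) := by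
  intro n hn art hart
  have hℓn : ℓ < n := by nlinarith
  have hℓn' : ℓ ≤ n := le_of_lt hℓn
  constructor
  · refine ⟨fun i => if (i:ℕ) < ℓ then ℓ else 0, ?_, ?_, ?_⟩
    · intro i
      by_cases h : (i:ℕ) < ℓ <;> simp [h] <;> omega
    · calc (∑ i : Fin n, if (i:ℕ) < ℓ then ℓ else 0) = ℓ * ℓ := sum_ite_lt n ℓ ℓ hℓn'
        _ ≤ n := by nlinarith
    · have hinner : ∀ i : Fin n, (if (i:ℕ) < ℓ then ℓ^4 else 0)
          ≤ ∑ j ∈ Finset.Icc 1 (if (i:ℕ) < ℓ then ℓ else 0), art i j := by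
        intro i
        by_cases h : (i:ℕ) < ℓ
        · rw [if_pos h, if_pos h, hart]
          simp only [if_pos h]
          have hmem : ℓ ∈ Finset.Icc 1 ℓ := by simp; omega
          have := Finset.single_le_sum (f := fun j => if j = ℓ then ℓ^4 else 1)
            (fun j _ => Nat.zero_le _) hmem
          simpa using this
        · rw [if_neg h]; exact Nat.zero_le _
      calc (ℓ:ℕ)^5 = ℓ * ℓ^4 := by ring
        _ = ∑ i : Fin n, (if (i:ℕ) < ℓ then ℓ^4 else 0) := (sum_ite_lt n ℓ (ℓ^4) hℓn').symm
        _ ≤ _ := Finset.sum_le_sum (fun i _ => hinner i)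
  · intro A
    have hlist : ∀ π : Equiv.Perm (Fin n), (List.ofFn fun k => (n, art (π k)))
        = (typeListFn n ℓ π).map (fun x => (n, if x then cAf ℓ else cBf ℓ n)) := by
      intro π
      rw [typeListFn, List.map_ofFn]
      refine congrArg List.ofFn (funext fun k => ?_)
      simp only [Function.comp_apply, hart]
      refine congrArg (Prod.mk n) ?_
      show (if (π k : ℕ) < ℓ then (fun j => if j = ℓ then ℓ ^ 4 else 1)
          else (fun j => if j = n then ℓ ^ 4 else 1)) = _
      by_cases h : (π k : ℕ) < ℓ
      · rw [if_pos h, if_pos (by simpa using h)]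
        rfl
      · rw [if_neg h, if_neg (by simpa using h)]
        rfl
    have hmaps : ∀ π : Equiv.Perm (Fin n), π ∈ (Finset.univ : Finset (Equiv.Perm (Fin n))) →
        typeListFn n ℓ π ∈ TL ℓ (n - ℓ) := by
      intro π _
      apply mem_TL
      · rw [typeListFn]; simp; omega
      · exact count_typeListFn n ℓ hℓn' π
    calc ∑ π : Equiv.Perm (Fin n), runAlg A [] n (List.ofFn fun k => (n, art (π k)))
        = ∑ t ∈ TL ℓ (n - ℓ), ∑ π ∈ Finset.univ.filter (fun π => typeListFn n ℓ π = t),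
            runAlg A [] n (List.ofFn fun k => (n, art (π k))) := by
          rw [Finset.sum_fiberwise_of_maps_to hmaps]
      _ ≤ ∑ t ∈ TL ℓ (n - ℓ), ℓ.factorial * (n - ℓ).factorial *
            runAlg A [] n (t.map fun x => (n, if x then cAf ℓ else cBf ℓ n)) := by
          apply Finset.sum_le_sum
          intro t ht
          have hcg : ∀ π ∈ Finset.univ.filter (fun π => typeListFn n ℓ π = t),
              runAlg A [] n (List.ofFn fun k => (n, art (π k)))
              = runAlg A [] n (t.map fun x => (n, if x then cAf ℓ else cBf ℓ n)) := by
            intro π hπ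
            simp only [Finset.mem_filter, Finset.mem_univ, true_and] at hπ
            rw [hlist π, hπ]
          rw [Finset.sum_congr rfl hcg, Finset.sum_const, smul_eq_mul]
          exact Nat.mul_le_mul_right _ (fiber_card_le n ℓ hℓn' t)
      _ = ℓ.factorial * (n - ℓ).factorial *
            ∑ t ∈ TL ℓ (n - ℓ), runAlg A [] n (t.map fun x => (n, if x then cAf ℓ else cBf ℓ n)) := by
          rw [Finset.mul_sum]
      _ ≤ ℓ.factorial * (n - ℓ).factorial *
            (n.choose ℓ * (n + ℓ^4 * 1) + ℓ^3 * n * ((n-1).choose (ℓ-1))) := by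
          apply Nat.mul_le_mul_left
          have hmb := main_bound A ℓ n hℓ hn n ℓ (n - ℓ) (by omega) [] n le_rfl
          rw [if_pos rfl, if_neg (by omega)] at hmb
          exact hmb
      _ ≤ 4 * ℓ^4 * n.factorial := by
          have h1 : n.choose ℓ * ℓ.factorial * (n - ℓ).factorial = n.factorial :=
            Nat.choose_mul_factorial_mul_factorial hℓn'
          have h2 : n * (n-1).choose (ℓ-1) = n.choose ℓ * ℓ := by
            obtain ⟨n', rfl⟩ : ∃ n', n = n' + 1 := ⟨n - 1, by omega⟩
            obtain ⟨ℓ', rfl⟩ : ∃ ℓ', ℓ = ℓ' + 1 := ⟨ℓ - 1, by omega⟩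
            simpa using Nat.add_one_mul_choose_eq n' ℓ'
          have hn4 : n ≤ ℓ^4 := by nlinarith
          calc ℓ.factorial * (n - ℓ).factorial * (n.choose ℓ * (n + ℓ^4 * 1) + ℓ^3 * n * ((n-1).choose (ℓ-1)))
              = n.factorial * (n + ℓ^4) + ℓ^3 * (n * ((n-1).choose (ℓ-1))) * (ℓ.factorial * (n - ℓ).factorial) := by
                rw [← h1]; ring
            _ = n.factorial * (n + ℓ^4) + ℓ^4 * n.factorial := by
                rw [h2, ← h1]; ring
            _ ≤ 4 * ℓ^4 * n.factorial := by nlinarith
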